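/- arXiv:1711.03057 — 2 statements merged into one kernel-verified Lean document; each statement's English description precedes it below -/
import Mathlib

section
/- Let p be an odd prime and let u, m, l, w ≥ 0 be integers with u + l ≥ m + w. Then ∑_{i∈ℤ} C(u−m+l, i(p−1)+l) · C(i(p−1), w) = ∑_{v=0}^{w} (−1)^{w−v} · C(l+w−v−1, w−v) · C(u−m+l, v) · M_{u−m+l−v, l−v}, where in the left-hand sum C(u−m+l, i(p−1)+l) is the usual binomial coefficient (zero unless 0 ≤ i(p−1)+l ≤ u−m+l) and C(i(p−1), w) is the generalized binomial coefficient with integer top i(p−1). -/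
/-- `Mfun p u n = ∑_{i ∈ ℤ} C(u, i(p-1)+n)`, written as a finite sum over the
potential values `k = i(p-1)+n` with `0 ≤ k ≤ u`. -/
def Mfun (p u : ℕ) (n : ℤ) : ℤ :=
  ∑ k ∈ Finset.range (u + 1), if ((p : ℤ) - 1) ∣ ((k : ℤ) - n) then (u.choose k : ℤ) else 0

/-- The descending factorial `z(z-1)⋯(z-n+1)` of a rational number. -/
def descFac (z : ℚ) (n : ℕ) : ℚ := ∏ i ∈ Finset.range n, (z - i)

/-- The generalized binomial coefficient `C(z, n)` for `z ∈ ℚ`, `n ∈ ℤ`: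
`z(z-1)⋯(z-n+1)/n!` for `n ≥ 0`, and `0` for `n < 0`. -/
def qchoose (z : ℚ) (n : ℤ) : ℚ :=
  if 0 ≤ n then descFac z n.toNat / (Nat.factorial n.toNat : ℚ) else 0

lemma descFac_smeval (z : ℚ) (n : ℕ) : (descPochhammer ℤ n).smeval z = descFac z n := by
  induction n with
  | zero => simp [descFac, descPochhammer_zero, Polynomial.smeval_one]
  | succ n ih =>
      rw [descPochhammer_succ_right, Polynomial.smeval_mul, ih,
        Polynomial.smeval_sub, Polynomial.smeval_X, Polynomial.smeval_natCast]
      simp only [descFac, Finset.prod_range_succ]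
      ring

lemma qchoose_natArg (z : ℚ) (n : ℕ) : qchoose z (n : ℤ) = Ring.choose z n := by
  have h := Ring.descPochhammer_eq_factorial_smul_choose z n
  rw [descFac_smeval] at h
  rw [qchoose, if_pos (Int.ofNat_nonneg n)]
  simp only [Int.toNat_natCast]
  rw [h, nsmul_eq_mul]
  field_simp [Nat.factorial_ne_zero]

lemma qchoose_natCast (a v : ℕ) : qchoose (a : ℚ) (v : ℤ) = (a.choose v : ℚ) := by
  rw [qchoose_natArg, Ring.choose_natCast]

lemma descFac_neg (x : ℚ) (n : ℕ) :
    descFac (-x) n = (-1) ^ n * descFac (x + n - 1) n := by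
  induction n with
  | zero => simp [descFac]
  | succ n ih =>
      have h1 : descFac (-x) (n + 1) = descFac (-x) n * (-x - n) := by
        simp [descFac, Finset.prod_range_succ]
      have h2 : descFac (x + (n + 1 : ℕ) - 1) (n + 1)
          = descFac (x + n - 1) n * (x + n) := by
        rw [descFac, Finset.prod_range_succ']
        push_cast
        rw [descFac]
        congr 1
        · apply Finset.prod_congr rfl
          intro i _
          push_cast
          ring
        · ring
      rw [h1, h2, ih]
      push_cast
      ring

lemma qchoose_neg (x : ℚ) (n : ℕ) :
    qchoose (-x) (n : ℤ) = (-1) ^ n * qchoose (x + n - 1) (n : ℤ) := by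
  rw [qchoose, qchoose, if_pos (Int.ofNat_nonneg n), if_pos (Int.ofNat_nonneg n)]
  simp only [Int.toNat_natCast]
  rw [descFac_neg, mul_div_assoc]

lemma qchoose_add (x y : ℚ) (w : ℕ) :
    qchoose (x + y) (w : ℤ) =
      ∑ v ∈ Finset.range (w + 1), qchoose x (v : ℤ) * qchoose y ((w - v : ℕ) : ℤ) := by
  simp only [qchoose_natArg]
  rw [Ring.add_choose_eq w (Commute.all x y)]
  rw [Finset.Nat.sum_antidiagonal_eq_sum_range_succ_mk]

lemma key_lemma (p l U v : ℕ) (hv : v ≤ U) :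
    (U.choose v : ℚ) * ((Mfun p (U - v) ((l : ℤ) - v)) : ℚ)
      = ∑ k ∈ Finset.range (U + 1),
          if ((p : ℤ) - 1) ∣ ((k : ℤ) - (l : ℤ)) then
            (U.choose k : ℚ) * (k.choose v : ℚ) else 0 := by
  have hM : ((Mfun p (U - v) ((l : ℤ) - v) : ℤ) : ℚ)
      = ∑ j ∈ Finset.range (U - v + 1),
          if ((p : ℤ) - 1) ∣ ((j : ℤ) - ((l : ℤ) - v)) then ((U - v).choose j : ℚ) else 0 := by
    simp [Mfun, apply_ite (fun z : ℤ => (z : ℚ))]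
  rw [hM, Finset.mul_sum]
  have hsplit : U + 1 = v + (U - v + 1) := by omega
  conv_rhs => rw [hsplit, Finset.sum_range_add]
  have h1 : (∑ k ∈ Finset.range v,
      if ((p : ℤ) - 1) ∣ ((k : ℤ) - (l : ℤ)) then (U.choose k : ℚ) * (k.choose v : ℚ) else 0) = 0 := by
    apply Finset.sum_eq_zero
    intro k hk
    have : k.choose v = 0 := Nat.choose_eq_zero_of_lt (Finset.mem_range.mp hk)
    simp [this]
  rw [h1, zero_add]
  apply Finset.sum_congr rfl
  intro j hj
  have hj' : j ≤ U - v := by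
    have := Finset.mem_range.mp hj; omega
  have hcond : ((v + j : ℕ) : ℤ) - (l : ℤ) = (j : ℤ) - ((l : ℤ) - v) := by
    push_cast; ring
  rw [hcond]
  have hchoose : U.choose (v + j) * (v + j).choose v = U.choose v * (U - v).choose j := by
    have := Nat.choose_mul (n := U) (k := v + j) (s := v) (by omega)
    simpa using this
  split_ifs with hc
  · exact_mod_cast congrArg (Nat.cast : ℕ → ℚ) hchoose.symm
  · simp

/-- `∑_{i ∈ ℤ} C(u-m+l, i(p-1)+l)·C(i(p-1), w)
  = ∑_{v=0}^{w} (-1)^{w-v} C(l+w-v-1, w-v) C(u-m+l, v) M_{u-m+l-v, l-v}`.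
The left-hand sum is written over the potential values `k = i(p-1)+l` with
`0 ≤ k ≤ u-m+l`, and `C(i(p-1), w) = C(k-l, w)` is a generalized binomial
coefficient with integer top. -/
theorem stmt_6 (p : ℕ) (hp : p.Prime) (hodd : Odd p) (u m l w : ℕ)
    (h : m + w ≤ u + l) :
    (∑ k ∈ Finset.range (u + l - m + 1),
        if ((p : ℤ) - 1) ∣ ((k : ℤ) - l) then
          ((u + l - m).choose k : ℚ) * qchoose ((k : ℚ) - l) (w : ℤ)
        else 0) =
      ∑ v ∈ Finset.range (w + 1),
        (-1 : ℚ) ^ (w - v) * qchoose ((l : ℚ) + w - v - 1) ((w : ℤ) - v) *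
          ((u + l - m).choose v : ℚ) * (Mfun p (u + l - m - v) ((l : ℤ) - v) : ℚ) := by
  set U := u + l - m with hU
  have hwU : w ≤ U := by omega
  set Q : ℕ → ℚ := fun v =>
    (-1 : ℚ) ^ (w - v) * qchoose ((l : ℚ) + ((w - v : ℕ) : ℚ) - 1) (((w - v : ℕ) : ℕ) : ℤ)
    with hQ
  have hL : (∑ k ∈ Finset.range (U + 1),
        if ((p : ℤ) - 1) ∣ ((k : ℤ) - l) then
          (U.choose k : ℚ) * qchoose ((k : ℚ) - l) (w : ℤ) else 0)
      = ∑ k ∈ Finset.range (U + 1), ∑ v ∈ Finset.range (w + 1),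
          (if ((p : ℤ) - 1) ∣ ((k : ℤ) - l) then
            (U.choose k : ℚ) * (k.choose v : ℚ) else 0) * Q v := by
    apply Finset.sum_congr rfl
    intro k _
    split_ifs with hc
    · have : ((k : ℚ) - l) = (k : ℚ) + (-(l : ℚ)) := by ring
      rw [this, qchoose_add, Finset.mul_sum]
      apply Finset.sum_congr rfl
      intro v _
      rw [qchoose_neg, qchoose_natCast, hQ]
      push_cast
      ring
    · rw [eq_comm]
      apply Finset.sum_eq_zero
      intro v _
      simp
  rw [hL, Finset.sum_comm]
  apply Finset.sum_congr rfl
  intro v hv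
  have hvw : v ≤ w := by
    have := Finset.mem_range.mp hv; omega
  rw [← Finset.sum_mul, ← key_lemma p l U v (le_trans hvw hwU)]
  have e1 : ((w : ℤ) - v) = (((w - v : ℕ) : ℕ) : ℤ) := by push_cast [Nat.cast_sub hvw]; ring
  have e2 : ((l : ℚ) + w - v - 1) = (l : ℚ) + ((w - v : ℕ) : ℚ) - 1 := by
    push_cast [Nat.cast_sub hvw]; ring
  rw [e1, e2, hQ]
  ring
end

section
/- For all integers α, m, u, w ≥ 0: ∑_{j=0}^{m} ∑_{l=1}^{j+1} (−1)^{m+j} · C(m, j) · C(j, l−1) · C(w+l−1, w) · C(α−j−1, l+u−j−1) = C(α−m−1, u) · C(w, m), where C(α−j−1, l+u−j−1) and C(α−m−1, u) are generalized binomial coefficients with (possibly negative) integer top. -/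
open Finset

lemma qchoose_neg_s16 (z : ℚ) {n : ℤ} (h : n < 0) : qchoose z n = 0 := by
  simp [qchoose, not_le.2 h]

lemma qchoose_ofNat (z : ℚ) (k : ℕ) :
    qchoose z (k : ℤ) = descFac z k / (Nat.factorial k : ℚ) := by
  simp [qchoose]

lemma descFac_succ (z : ℚ) (n : ℕ) : descFac z (n+1) = descFac z n * (z - n) := by
  simp [descFac, Finset.prod_range_succ]

lemma descFac_succ_left (z : ℚ) (n : ℕ) : descFac (z+1) (n+1) = (z+1) * descFac z n := by
  rw [descFac, Finset.prod_range_succ']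
  simp only [Nat.cast_zero, sub_zero, descFac]
  rw [mul_comm]
  congr 1
  apply Finset.prod_congr rfl
  intro i _
  push_cast
  ring

lemma qchoose_pascal (z : ℚ) (n : ℤ) :
    qchoose (z+1) n = qchoose z n + qchoose z (n-1) := by
  rcases lt_trichotomy n 0 with h | h | h
  · rw [qchoose_neg_s16 _ h, qchoose_neg_s16 _ h, qchoose_neg_s16 _ (by omega)]; ring
  · subst h
    have : (0:ℤ) - 1 < 0 := by omega
    rw [qchoose_neg_s16 _ this]
    simp [qchoose, descFac]
  · obtain ⟨k, rfl⟩ : ∃ k : ℕ, n = ((k:ℤ) + 1) := ⟨(n-1).toNat, by omega⟩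
    have h1 : ((k:ℤ) + 1) = ((k+1 : ℕ) : ℤ) := by push_cast; ring
    have h2' : ((k+1:ℕ):ℤ) - 1 = ((k:ℕ):ℤ) := by push_cast; ring
    rw [h1, h2', qchoose_ofNat, qchoose_ofNat, qchoose_ofNat]
    rw [descFac_succ_left, descFac_succ]
    have hf : ((Nat.factorial (k+1) : ℚ)) = (k+1) * (Nat.factorial k : ℚ) := by
      rw [Nat.factorial_succ]; push_cast; ring
    rw [hf]
    have hk0 : (Nat.factorial k : ℚ) ≠ 0 := by exact_mod_cast (Nat.factorial_pos k).ne'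
    have hk1 : ((k:ℚ)+1) ≠ 0 := by positivity
    field_simp
    ring

lemma qchoose_vandermonde (z : ℚ) (n : ℕ) : ∀ k : ℤ,
    ∑ s ∈ range (n+1), (n.choose s : ℚ) * qchoose z (k - s) = qchoose (z + n) k := by
  induction n with
  | zero => intro k; simp
  | succ n ih =>
    intro k
    have e1 : ∀ s : ℕ, ((n+1).choose (s+1) : ℚ) * qchoose z (k - (s+1:ℕ))
        = (n.choose s : ℚ) * qchoose z ((k-1) - s)
          + (n.choose (s+1) : ℚ) * qchoose z (k - (s+1:ℕ)) := by
      intro s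
      rw [Nat.choose_succ_succ]
      have hidx : k - ((s+1:ℕ):ℤ) = (k-1) - (s:ℤ) := by push_cast; ring
      rw [hidx]
      push_cast
      ring
    have peel : ∑ s ∈ range (n+1), (n.choose (s+1) : ℚ) * qchoose z (k - (s+1:ℕ))
        = ∑ s ∈ range n, (n.choose (s+1) : ℚ) * qchoose z (k - (s+1:ℕ)) := by
      rw [Finset.sum_range_succ]
      simp [Nat.choose_succ_self]
    calc ∑ s ∈ range (n+1+1), ((n+1).choose s : ℚ) * qchoose z (k - s)
        = (∑ s ∈ range (n+1), ((n+1).choose (s+1) : ℚ) * qchoose z (k - (s+1:ℕ)))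
          + ((n+1).choose 0 : ℚ) * qchoose z (k - (0:ℕ)) := by
          rw [Finset.sum_range_succ' (fun s => ((n+1).choose s : ℚ) * qchoose z (k - s)) (n+1)]
      _ = (∑ s ∈ range (n+1), (n.choose s : ℚ) * qchoose z ((k-1) - s))
          + ((∑ s ∈ range n, (n.choose (s+1) : ℚ) * qchoose z (k - (s+1:ℕ)))
             + (n.choose 0 : ℚ) * qchoose z (k - (0:ℕ))) := by
          rw [Finset.sum_congr rfl (fun s _ => e1 s), Finset.sum_add_distrib, peel]
          simp
          ring
      _ = qchoose (z + n) (k-1) + qchoose (z + n) k := by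
          rw [ih (k-1),
            ← Finset.sum_range_succ' (fun s => (n.choose s : ℚ) * qchoose z (k - s)) n, ih k]
      _ = qchoose (z + (n+1:ℕ)) k := by
          have : z + ((n+1:ℕ):ℚ) = (z + n) + 1 := by push_cast; ring
          rw [this, qchoose_pascal]
          ring

lemma stepA (x : ℚ) (w u j : ℕ) :
    ∑ k ∈ range (j+1), (j.choose k : ℚ) * ((w+k).choose w : ℚ)
        * qchoose (x - j - 1) ((u:ℤ) + k - j)
    = ∑ t ∈ range (j+1), (j.choose t : ℚ) * (w.choose t : ℚ) * qchoose (x - t - 1) (u:ℤ) := by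
  -- expand C(w+k, w) by Vandermonde
  have hw : ∀ k, k ≤ j → ((w+k).choose w : ℚ)
      = ∑ t ∈ range (j+1), (w.choose t : ℚ) * (k.choose t : ℚ) := by
    intro k hk
    have h1 : (w+k).choose w = ∑ t ∈ range (k+1), w.choose t * k.choose t := by
      rw [Nat.choose_symm_add, Nat.add_choose_eq,
        Finset.Nat.sum_antidiagonal_eq_sum_range_succ_mk]
      apply Finset.sum_congr rfl
      intro t ht
      have htk : t ≤ k := by have := mem_range.mp ht; omega
      rw [Nat.choose_symm htk]
    have h2 : (∑ t ∈ range (k+1), w.choose t * k.choose t)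
        = ∑ t ∈ range (j+1), w.choose t * k.choose t := by
      apply Finset.sum_subset (Finset.range_subset_range.2 (by omega))
      intro t _ ht
      have : k < t := by simp at ht ⊢; omega
      simp [Nat.choose_eq_zero_of_lt this]
    rw [h1, h2]
    push_cast
    rfl
  rw [Finset.sum_congr rfl (fun k hk => by
    rw [hw k (by simpa using Nat.lt_succ_iff.mp (mem_range.mp hk))])]
  set Q : ℕ → ℚ := fun k => qchoose (x - j - 1) ((u:ℤ) + k - j) with hQ
  have inner : ∀ t, t ≤ j →
      ∑ k ∈ range (j+1), (j.choose k : ℚ) * (k.choose t : ℚ) * Q k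
        = (j.choose t : ℚ) * qchoose (x - t - 1) (u:ℤ) := by
    intro t ht
    have hrestrict : ∑ k ∈ range (j+1), (j.choose k : ℚ) * (k.choose t : ℚ) * Q k
        = ∑ k ∈ Finset.Icc t j, (j.choose k : ℚ) * (k.choose t : ℚ) * Q k := by
      symm
      apply Finset.sum_subset
      · intro k hk
        simp only [Finset.mem_Icc] at hk
        exact mem_range.mpr (by omega)
      · intro k hk hk2
        simp only [mem_range, Finset.mem_Icc] at hk hk2
        have : k < t := by omega
        simp [Nat.choose_eq_zero_of_lt this]
    rw [hrestrict]
    have hIcc : Finset.Icc t j = Finset.Ico t (j+1) := by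
      rw [Finset.Ico_add_one_right_eq_Icc]
    rw [hIcc, Finset.sum_Ico_eq_sum_range]
    have hn : j + 1 - t = (j - t) + 1 := by omega
    rw [hn]
    set n := j - t with hndef
    have step : ∀ i, i ∈ range (n+1) →
        (j.choose (t+i) : ℚ) * ((t+i).choose t : ℚ) * Q (t+i)
          = (j.choose t : ℚ) * ((n.choose i : ℚ) * Q (t+i)) := by
      intro i hi
      have hi' : i ≤ n := by have := mem_range.mp hi; omega
      have hmul : j.choose (t+i) * (t+i).choose t = j.choose t * n.choose i := by
        rw [Nat.choose_mul (hsk := (by omega : t ≤ t+i))]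
        have e1 : t + i - t = i := by omega
        rw [e1, ← hndef]
      calc (j.choose (t+i) : ℚ) * ((t+i).choose t : ℚ) * Q (t+i)
          = ((j.choose (t+i) * (t+i).choose t : ℕ) : ℚ) * Q (t+i) := by push_cast; ring
        _ = ((j.choose t * n.choose i : ℕ) : ℚ) * Q (t+i) := by rw [hmul]
        _ = (j.choose t : ℚ) * ((n.choose i : ℚ) * Q (t+i)) := by push_cast; ring
    rw [Finset.sum_congr rfl step, ← Finset.mul_sum]
    congr 1
    -- ∑ i ∈ range (n+1), (n.choose i) * Q (t+i) = qchoose (x - t - 1) u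
    have hreflect : ∑ i ∈ range (n+1), (n.choose i : ℚ) * Q (t+i)
        = ∑ i ∈ range (n+1), (n.choose (n+1-1-i) : ℚ) * Q (t+(n+1-1-i)) := by
      rw [Finset.sum_range_reflect (fun i => (n.choose i : ℚ) * Q (t+i)) (n+1)]
    rw [hreflect]
    have term : ∀ i, i ∈ range (n+1) →
        (n.choose (n+1-1-i) : ℚ) * Q (t+(n+1-1-i))
          = (n.choose i : ℚ) * qchoose (x - j - 1) ((u:ℤ) - i) := by
      intro i hi
      have hi' : i ≤ n := by have := mem_range.mp hi; omega
      have h1 : n+1-1-i = n - i := by omega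
      rw [h1, Nat.choose_symm hi']
      congr 2
      simp only [hQ]
      congr 1
      have : ((t + (n - i) : ℕ) : ℤ) = (t : ℤ) + (n : ℤ) - (i : ℤ) := by
        omega
      rw [this]
      have hj : (t : ℤ) + (n : ℤ) = (j : ℤ) := by omega
      omega
    rw [Finset.sum_congr rfl term, qchoose_vandermonde (x - j - 1) n (u:ℤ)]
    congr 1
    have : ((n:ℕ) : ℚ) = (j : ℚ) - (t : ℚ) := by
      rw [hndef]
      push_cast [Nat.cast_sub ht]
      ring
    rw [this]
    ring
  calc ∑ k ∈ range (j+1),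
        (j.choose k : ℚ) * (∑ t ∈ range (j+1), (w.choose t : ℚ) * (k.choose t : ℚ)) * Q k
      = ∑ k ∈ range (j+1), ∑ t ∈ range (j+1),
          (w.choose t : ℚ) * ((j.choose k : ℚ) * (k.choose t : ℚ) * Q k) := by
        apply Finset.sum_congr rfl
        intro k _
        rw [Finset.mul_sum, Finset.sum_mul]
        apply Finset.sum_congr rfl
        intro t _
        ring
    _ = ∑ t ∈ range (j+1), ∑ k ∈ range (j+1),
          (w.choose t : ℚ) * ((j.choose k : ℚ) * (k.choose t : ℚ) * Q k) := Finset.sum_comm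
    _ = ∑ t ∈ range (j+1), (j.choose t : ℚ) * (w.choose t : ℚ) * qchoose (x - t - 1) (u:ℤ) := by
        apply Finset.sum_congr rfl
        intro t ht
        rw [← Finset.mul_sum, inner t (by have := mem_range.mp ht; omega)]
        ring

/-- `∑_{j=0}^{m} ∑_{l=1}^{j+1} (-1)^{m+j} C(m,j) C(j,l-1) C(w+l-1,w) C(α-j-1, l+u-j-1)
  = C(α-m-1, u) C(w,m)`, with generalized binomial coefficients where the top may be
negative. -/
theorem stmt_16 (α m u w : ℕ) :
    ∑ j ∈ Finset.range (m + 1), ∑ l ∈ Finset.Icc 1 (j + 1),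
        (-1 : ℚ) ^ (m + j) * (m.choose j : ℚ) * (j.choose (l - 1) : ℚ) *
          ((w + l - 1).choose w : ℚ) *
          qchoose ((α : ℚ) - j - 1) ((l : ℤ) + u - j - 1) =
      qchoose ((α : ℚ) - m - 1) (u : ℤ) * (w.choose m : ℚ) := by
  have alt : ∀ t, t ≤ m →
      ∑ j ∈ range (m+1), (-1:ℚ)^(m+j) * (m.choose j : ℚ) * (j.choose t : ℚ)
        = if t = m then 1 else 0 := by
    intro t ht
    have hrestrict : ∑ j ∈ range (m+1), (-1:ℚ)^(m+j) * (m.choose j : ℚ) * (j.choose t : ℚ)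
        = ∑ j ∈ Finset.Icc t m, (-1:ℚ)^(m+j) * (m.choose j : ℚ) * (j.choose t : ℚ) := by
      symm
      apply Finset.sum_subset
      · intro j hj
        simp only [Finset.mem_Icc] at hj
        exact mem_range.mpr (by omega)
      · intro j hj hj2
        simp only [mem_range, Finset.mem_Icc] at hj hj2
        have : j < t := by omega
        simp [Nat.choose_eq_zero_of_lt this]
    rw [hrestrict, ← Finset.Ico_add_one_right_eq_Icc, Finset.sum_Ico_eq_sum_range]
    have hn : m + 1 - t = (m - t) + 1 := by omega
    rw [hn]
    set n := m - t with hndef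
    have step : ∀ i, i ∈ range (n+1) →
        (-1:ℚ)^(m+(t+i)) * (m.choose (t+i) : ℚ) * ((t+i).choose t : ℚ)
          = ((-1:ℚ)^(m+t) * (m.choose t : ℚ)) * ((-1:ℚ)^i * (n.choose i : ℚ)) := by
      intro i hi
      have hi' : i ≤ n := by have := mem_range.mp hi; omega
      have hmul : m.choose (t+i) * (t+i).choose t = m.choose t * n.choose i := by
        rw [Nat.choose_mul (hsk := (by omega : t ≤ t+i))]
        have e1 : t + i - t = i := by omega
        rw [e1, ← hndef]
      have hpow : (-1:ℚ)^(m+(t+i)) = (-1:ℚ)^(m+t) * (-1:ℚ)^i := by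
        rw [← pow_add]
        congr 1
        omega
      calc (-1:ℚ)^(m+(t+i)) * (m.choose (t+i) : ℚ) * ((t+i).choose t : ℚ)
          = (-1:ℚ)^(m+(t+i)) * ((m.choose (t+i) * (t+i).choose t : ℕ) : ℚ) := by
            push_cast; ring
        _ = (-1:ℚ)^(m+(t+i)) * ((m.choose t * n.choose i : ℕ) : ℚ) := by rw [hmul]
        _ = ((-1:ℚ)^(m+t) * (m.choose t : ℚ)) * ((-1:ℚ)^i * (n.choose i : ℚ)) := by
            rw [hpow]; push_cast; ring
    rw [Finset.sum_congr rfl step, ← Finset.mul_sum]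
    have key : (∑ i ∈ range (n+1), ((-1:ℚ)^i * (n.choose i : ℚ)))
        = if n = 0 then 1 else 0 := by
      have h := congrArg (fun z : ℤ => (z : ℚ)) (Int.alternating_sum_range_choose (n := n))
      push_cast [apply_ite (fun z : ℤ => (z : ℚ))] at h
      exact h
    rw [key]
    by_cases hcase : t = m
    · subst hcase
      have : n = 0 := by omega
      simp [this]
    · have : n ≠ 0 := by omega
      simp [this, hcase]
  have reindex : ∀ j, ∑ l ∈ Finset.Icc 1 (j+1),
        (-1:ℚ)^(m+j) * (m.choose j : ℚ) * (j.choose (l-1) : ℚ) * ((w+l-1).choose w : ℚ)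
          * qchoose ((α:ℚ)-j-1) ((l:ℤ)+u-j-1)
      = (-1:ℚ)^(m+j) * (m.choose j : ℚ) * ∑ k ∈ range (j+1),
          (j.choose k : ℚ) * ((w+k).choose w : ℚ) * qchoose ((α:ℚ)-j-1) ((u:ℤ)+k-j) := by
    intro j
    rw [← Finset.Ico_add_one_right_eq_Icc, Finset.sum_Ico_eq_sum_range]
    have hr : j + 1 + 1 - 1 = j + 1 := by omega
    rw [hr, Finset.mul_sum]
    apply Finset.sum_congr rfl
    intro k _
    have e1 : 1 + k - 1 = k := by omega
    have e2 : w + (1 + k) - 1 = w + k := by omega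
    have e3 : ((1 + k : ℕ) : ℤ) + u - j - 1 = (u:ℤ) + k - j := by push_cast; ring
    rw [e1, e2, e3]
    ring
  calc ∑ j ∈ Finset.range (m + 1), ∑ l ∈ Finset.Icc 1 (j + 1),
        (-1 : ℚ) ^ (m + j) * (m.choose j : ℚ) * (j.choose (l - 1) : ℚ) *
          ((w + l - 1).choose w : ℚ) *
          qchoose ((α : ℚ) - j - 1) ((l : ℤ) + u - j - 1)
      = ∑ j ∈ range (m+1), (-1:ℚ)^(m+j) * (m.choose j : ℚ) * ∑ t ∈ range (j+1),
          (j.choose t : ℚ) * (w.choose t : ℚ) * qchoose ((α:ℚ) - t - 1) (u:ℤ) := by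
        apply Finset.sum_congr rfl
        intro j _
        rw [reindex j, stepA (α:ℚ) w u j]
    _ = ∑ j ∈ range (m+1), ∑ t ∈ range (m+1),
          (-1:ℚ)^(m+j) * (m.choose j : ℚ)
            * ((j.choose t : ℚ) * (w.choose t : ℚ) * qchoose ((α:ℚ) - t - 1) (u:ℤ)) := by
        apply Finset.sum_congr rfl
        intro j hj
        rw [Finset.mul_sum]
        apply Finset.sum_subset (Finset.range_subset_range.2 (by
          have := mem_range.mp hj; omega))
        intro t _ ht2
        have hjt : j < t := by
          simp only [mem_range, not_lt] at ht2
          omega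
        simp [Nat.choose_eq_zero_of_lt hjt]
    _ = ∑ t ∈ range (m+1), ((w.choose t : ℚ) * qchoose ((α:ℚ) - t - 1) (u:ℤ))
          * ∑ j ∈ range (m+1), (-1:ℚ)^(m+j) * (m.choose j : ℚ) * (j.choose t : ℚ) := by
        rw [Finset.sum_comm]
        apply Finset.sum_congr rfl
        intro t _
        rw [Finset.mul_sum]
        apply Finset.sum_congr rfl
        intro j _
        ring
    _ = ∑ t ∈ range (m+1), ((w.choose t : ℚ) * qchoose ((α:ℚ) - t - 1) (u:ℤ))
          * (if t = m then 1 else 0) := by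
        apply Finset.sum_congr rfl
        intro t ht
        rw [alt t (by have := mem_range.mp ht; omega)]
    _ = qchoose ((α : ℚ) - m - 1) (u : ℤ) * (w.choose m : ℚ) := by
        simp only [mul_ite, mul_one, mul_zero]
        rw [Finset.sum_ite_eq' (range (m+1)) m
          (fun t => (w.choose t : ℚ) * qchoose ((α:ℚ) - t - 1) (u:ℤ))]
        simp only [mem_range, lt_add_iff_pos_left]
        rw [if_pos (by omega)]
        ring
end
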